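/- Let f : Γ = (V,E) → Σ = (W,F) be a holomorphic mapping of finite simple graphs with dilation λ : V → ℕ, meaning x ∼ y implies f(x) = f(y) or f(x) ∼ f(y), and for each x ∈ V and each z′ ∼ f(x) the number of neighbors x′ of x with f(x′) = z′ equals λ(x) (independent of z′). Suppose ψ : W → ℂ and μ : W → ℝ satisfy (μ(z)/m(z))·(∑_{z′∼z}(ψ(z′)−ψ(z)))² = ∑_{z′∼z}(ψ(z′)−ψ(z))² at every z ∈ W, where m(z) is the degree of z. Then for every x ∈ V with λ(x) ≠ 0, the function φ = ψ ∘ f satisfies (γ(x)/n(x))·(∑_{x′∼x}(φ(x′)−φ(x)))² = ∑_{x′∼x}(φ(x′)−φ(x))² with γ(x) = n(x)·μ(f(x))/(λ(x)·m(f(x))). -/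

import Mathlib

theorem stmt17 {V W : Type*} [Fintype V] [Fintype W] [DecidableEq V] [DecidableEq W]
    (G : SimpleGraph V) [DecidableRel G.Adj]
    (H : SimpleGraph W) [DecidableRel H.Adj]
    (f : V → W)
    (hmap : ∀ x y, G.Adj x y → f x = f y ∨ H.Adj (f x) (f y))
    (lam : V → ℕ)
    (hdil : ∀ x : V, ∀ z' ∈ H.neighborFinset (f x),
      ((G.neighborFinset x).filter (fun x' => f x' = z')).card = lam x)
    (ψ : W → ℂ) (μ : W → ℝ)
    (hψ : ∀ z : W, ((μ z : ℂ) / (H.degree z : ℂ))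
          * (∑ z' ∈ H.neighborFinset z, (ψ z' - ψ z)) ^ 2
        = ∑ z' ∈ H.neighborFinset z, (ψ z' - ψ z) ^ 2) :
    ∀ x : V, lam x ≠ 0 →
      ((((G.degree x : ℝ) * μ (f x) / ((lam x : ℝ) * (H.degree (f x) : ℝ)) : ℝ) : ℂ)
            / (G.degree x : ℂ))
          * (∑ x' ∈ G.neighborFinset x, (ψ (f x') - ψ (f x))) ^ 2
        = ∑ x' ∈ G.neighborFinset x, (ψ (f x') - ψ (f x)) ^ 2 := by
  intro x hlx
  have hmaps : ∀ x' ∈ G.neighborFinset x,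
      f x' ∈ insert (f x) (H.neighborFinset (f x)) := by
    intro x' hx'
    rw [SimpleGraph.mem_neighborFinset] at hx'
    rcases hmap x x' hx' with h | h
    · simp [h.symm]
    · simp [SimpleGraph.mem_neighborFinset, h]
  have key : ∀ F : W → ℂ, F (f x) = 0 →
      ∑ x' ∈ G.neighborFinset x, F (f x')
        = (lam x : ℂ) * ∑ z' ∈ H.neighborFinset (f x), F z' := by
    intro F hF
    rw [← Finset.sum_fiberwise_of_maps_to hmaps (fun x' => F (f x'))]
    rw [Finset.sum_insert (by simp)]
    have h1 : ∑ x' ∈ (G.neighborFinset x).filter (fun x' => f x' = f x), F (f x') = 0 := by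
      apply Finset.sum_eq_zero
      intro x' hx'
      rw [(Finset.mem_filter.mp hx').2, hF]
    rw [h1, zero_add, Finset.mul_sum]
    refine Finset.sum_congr rfl (fun z' hz' => ?_)
    rw [Finset.sum_congr rfl (fun x' hx' => by rw [(Finset.mem_filter.mp hx').2]),
        Finset.sum_const, hdil x z' hz', nsmul_eq_mul]
  have hS := key (fun w => ψ w - ψ (f x)) (by simp)
  have hQ := key (fun w => (ψ w - ψ (f x)) ^ 2) (by simp)
  rw [hS, hQ, ← hψ (f x)]
  set S : ℂ := ∑ z' ∈ H.neighborFinset (f x), (ψ z' - ψ (f x)) with hSdef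
  have hlc : (lam x : ℂ) ≠ 0 := Nat.cast_ne_zero.mpr hlx
  by_cases hm : H.degree (f x) = 0
  · have hNe : H.neighborFinset (f x) = ∅ := by
      rwa [← Finset.card_eq_zero, SimpleGraph.card_neighborFinset_eq_degree]
    have : S = 0 := by rw [hSdef, hNe, Finset.sum_empty]
    simp [this]
  · by_cases hn : G.degree x = 0
    · have hNe : G.neighborFinset x = ∅ := by
        rwa [← Finset.card_eq_zero, SimpleGraph.card_neighborFinset_eq_degree]
      have hS0 : S = 0 := by
        have := hS
        rw [hNe, Finset.sum_empty] at this
        rcases mul_eq_zero.mp this.symm with h | h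
        · exact absurd h hlc
        · exact h
      simp [hS0]
    · have hnc : (G.degree x : ℂ) ≠ 0 := Nat.cast_ne_zero.mpr hn
      have hmc : (H.degree (f x) : ℂ) ≠ 0 := Nat.cast_ne_zero.mpr hm
      push_cast
      field_simp
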